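/- If f is holomorphic near z₀ with f(z) ~ c(z−z₀)^{−m} as z → z₀ for some c ≠ 0 and integer m ≥ 0 (i.e., f has a pole of order m at z₀ when m ≥ 1, or f(z₀) = c ≠ 0 when m = 0), then the equation ż = f(z) has exactly m+1 trajectories tending to z₀ in increasing time, each taking finite time to reach z₀. -/

import Mathlib

open Filter Set Complex Metric
open scoped NNReal ENNReal Topology


private lemma aux_const {q : ℝ → ℂ} {s : Set ℝ} (hs : s.OrdConnected)
    (hq : ∀ t ∈ s, HasDerivAt q 0 t) :
    ∀ x ∈ s, ∀ y ∈ s, q x = q y := by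
  have key : ∀ x ∈ s, ∀ y ∈ s, x ≤ y → q y = q x := by
    intro x hx y hy hxy
    have hsub : Set.Icc x y ⊆ s := hs.out hx hy
    exact constant_of_has_deriv_right_zero
      (fun t ht => (hq t (hsub ht)).continuousAt.continuousWithinAt)
      (fun t ht => ((hq t (hsub (Set.Ico_subset_Icc_self ht))).hasDerivWithinAt))
      y (Set.right_mem_Icc.2 hxy)
  intro x hx y hy
  rcases le_total x y with h | h
  · exact (key x hx y hy h).symm
  · exact key y hy x hx h

/-- the `j`-th root direction. -/
noncomputable def eRoot (n : ℕ) (j : ℕ) : ℂ :=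
  Complex.exp ((((2 * j + 1 : ℕ) : ℝ) * Real.pi / n : ℝ) * Complex.I)

lemma eRoot_norm (n j : ℕ) : ‖eRoot n j‖ = 1 :=
  Complex.norm_exp_ofReal_mul_I _

lemma eRoot_pow {n : ℕ} (hn : 0 < n) (j : ℕ) : eRoot n j ^ n = -1 := by
  rw [eRoot, ← Complex.exp_nat_mul]
  have hn' : (n : ℂ) ≠ 0 := Nat.cast_ne_zero.2 hn.ne'
  have : (n : ℂ) * ((((2 * j + 1 : ℕ) : ℝ) * Real.pi / n : ℝ) : ℂ) * Complex.I
      = ((2 * j + 1 : ℕ) : ℂ) * (Real.pi * Complex.I) := by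
    push_cast
    field_simp
  rw [← mul_assoc, this, Complex.exp_nat_mul, Complex.exp_pi_mul_I]
  exact Odd.neg_one_pow ⟨j, by ring⟩

lemma eRoot_inj {n : ℕ} (hn : 0 < n) {j k : ℕ} (hj : j < n) (hk : k < n)
    (h : eRoot n j = eRoot n k) : j = k := by
  rw [eRoot, eRoot, Complex.exp_eq_exp_iff_exists_int] at h
  obtain ⟨l, hl⟩ := h
  have hπ : (Real.pi : ℂ) ≠ 0 := by
    simpa using Real.pi_ne_zero
  have hn' : (n : ℂ) ≠ 0 := Nat.cast_ne_zero.2 hn.ne'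
  have hI : (Complex.I : ℂ) ≠ 0 := Complex.I_ne_zero
  have key : ((2 * j + 1 : ℕ) : ℂ) = ((2 * k + 1 : ℕ) : ℂ) + (l : ℂ) * (2 * n) := by
    have hu : (Real.pi : ℂ) / n * Complex.I ≠ 0 := by
      exact mul_ne_zero (div_ne_zero hπ hn') hI
    have key0 : ((((2 * j + 1 : ℕ) : ℂ)) - (((2 * k + 1 : ℕ) : ℂ)) - (l : ℂ) * (2 * n))
        * ((Real.pi : ℂ) / n * Complex.I) = 0 := by
      push_cast at hl ⊢
      field_simp at hl ⊢
      linear_combination ((Real.pi : ℂ) * Complex.I) * hl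
    rcases mul_eq_zero.1 key0 with h0 | h0
    · linear_combination h0
    · exact absurd h0 hu
  have key' : (2 * j + 1 : ℤ) = (2 * k + 1 : ℤ) + l * (2 * n) := by exact_mod_cast key
  have : (j : ℤ) = k + l * n := by linarith
  have hln : l = 0 := by
    rcases lt_trichotomy l 0 with h' | h' | h'
    · nlinarith [hj, hk, (by exact_mod_cast hj : (j:ℤ) < n), (by exact_mod_cast hk : (k:ℤ) < n),
        (by positivity : (0:ℤ) ≤ (j:ℤ)), (by positivity : (0:ℤ) ≤ (k:ℤ))]
    · exact h'
    · nlinarith [(by exact_mod_cast hj : (j:ℤ) < n), (by exact_mod_cast hk : (k:ℤ) < n),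
        (by positivity : (0:ℤ) ≤ (j:ℤ)), (by positivity : (0:ℤ) ≤ (k:ℤ))]
  have hjk : (j : ℤ) = k := by rw [hln] at this; simpa using this
  exact_mod_cast hjk

lemma aux_root {n : ℕ} (hn : 0 < n) {u : ℂ} (hu : u ^ n = -1) :
    ∃ j : Fin n, u = eRoot n j := by
  have hu0 : u ≠ 0 := by
    intro h; rw [h] at hu; simp [zero_pow hn.ne'] at hu
  obtain ⟨v, hv⟩ : ∃ v, Complex.exp v = u := by
    have : u ∈ Set.range Complex.exp := by rw [Complex.range_exp]; exact hu0
    exact this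
  have hnv : Complex.exp ((n : ℂ) * v) = -1 := by rw [Complex.exp_nat_mul, hv, hu]
  rw [← Complex.exp_pi_mul_I, Complex.exp_eq_exp_iff_exists_int] at hnv
  obtain ⟨l, hl⟩ := hnv
  have hn' : (n : ℂ) ≠ 0 := Nat.cast_ne_zero.2 hn.ne'
  have hv' : v = ((2 * l + 1 : ℤ) : ℂ) * Real.pi / n * Complex.I := by
    field_simp
    push_cast at hl ⊢
    linear_combination hl
  set k : ℤ := l % n with hk
  have hk0 : 0 ≤ k := Int.emod_nonneg _ (by exact_mod_cast hn.ne')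
  have hkn : k < n := Int.emod_lt_of_pos _ (by exact_mod_cast hn)
  obtain ⟨q, hq⟩ : (n : ℤ) ∣ (l - k) := Int.dvd_self_sub_of_emod_eq rfl
  refine ⟨⟨k.toNat, by omega⟩, ?_⟩
  rw [← hv, eRoot, hv', Complex.exp_eq_exp_iff_exists_int]
  refine ⟨q, ?_⟩
  have hqC : (l : ℂ) - k = n * q := by exact_mod_cast hq
  have hkC : ((k.toNat : ℕ) : ℂ) = (k : ℂ) := by
    exact_mod_cast congrArg (fun z : ℤ => (z : ℂ)) (Int.toNat_of_nonneg hk0)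
  push_cast [hkC]
  field_simp
  linear_combination 2 * hqC


private lemma aux_primitive {h : ℂ → ℂ} {z₀ : ℂ} (hh : AnalyticAt ℂ h z₀) (m : ℕ) :
    ∃ (Ψ : ℂ → ℂ) (r : ℝ), 0 < r ∧
      AnalyticAt ℂ Ψ z₀ ∧ Ψ z₀ = h z₀ / (m + 1 : ℕ) ∧
      (∀ z ∈ Metric.ball z₀ r, DifferentiableAt ℂ Ψ z) ∧
      (∀ z ∈ Metric.ball z₀ r,
        HasDerivAt (fun w => (w - z₀) ^ (m + 1) * Ψ w) ((z - z₀) ^ m * h z) z) := by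
  set n : ℕ := m + 1 with hn
  obtain ⟨p, hpa⟩ := hh
  obtain ⟨r0, hp⟩ := hpa
  obtain ⟨r₂, h0r₂, hr₂r⟩ := ENNReal.lt_iff_exists_nnreal_btwn.1 hp.r_pos
  have hr₂pos : 0 < r₂ := by exact_mod_cast h0r₂
  set r₃ : ℝ≥0 := r₂ / 2 with hr₃def
  set r₄ : ℝ≥0 := r₂ / 4 with hr₄def
  have hr₃pos : 0 < (r₃ : ℝ) := by positivity
  have hr₄pos : 0 < (r₄ : ℝ) := by positivity
  have hr₃lt : (r₃ : ℝ≥0∞) < r0 := lt_of_le_of_lt (by exact_mod_cast NNReal.half_le_self _) hr₂r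
  have hr₄le₂ : (r₄ : ℝ) ≤ (r₂ : ℝ) := by
    rw [hr₄def]; push_cast; linarith [NNReal.coe_nonneg r₂]
  have hr₃le₂ : (r₃ : ℝ) ≤ (r₂ : ℝ) := by
    rw [hr₃def]; push_cast; linarith [NNReal.coe_nonneg r₂]
  have hr₄lt : (r₄ : ℝ≥0∞) < r0 := by
    refine lt_of_le_of_lt ?_ hr₂r
    exact ENNReal.coe_le_coe.2 (by exact_mod_cast hr₄le₂)
  have hr₄₃ : (r₄ : ℝ) = (r₃ : ℝ) / 2 := by
    rw [hr₃def, hr₄def]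
    push_cast
    ring
  set A : ℕ → ℂ := fun k => p.coeff k / ((k : ℂ) + n) with hA
  have hkn0 : ∀ k : ℕ, ((k : ℂ) + n) ≠ 0 := by
    intro k
    have : ((k : ℂ) + n) = ((k + n : ℕ) : ℂ) := by push_cast; ring
    rw [this]
    exact Nat.cast_ne_zero.2 (by omega)
  have hAle : ∀ k, ‖A k‖ ≤ ‖p.coeff k‖ := by
    intro k
    rw [hA]
    simp only [norm_div]
    have h1 : (1 : ℝ) ≤ ‖(k : ℂ) + n‖ := by
      have : ((k : ℂ) + n) = ((k + n : ℕ) : ℂ) := by push_cast; ring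
      rw [this, Complex.norm_natCast]
      exact_mod_cast Nat.one_le_iff_ne_zero.2 (by omega)
    calc ‖p.coeff k‖ / ‖(k : ℂ) + n‖ ≤ ‖p.coeff k‖ / 1 := by
          apply div_le_div_of_nonneg_left (norm_nonneg _) one_pos h1
      _ = ‖p.coeff k‖ := by rw [div_one]
  set Ψ : ℂ → ℂ := fun z => ∑' k, A k * (z - z₀) ^ k with hΨ
  -- summability of coefficient norms
  have S : ∀ s : ℝ≥0, (s : ℝ≥0∞) < r0 → Summable (fun k => ‖p.coeff k‖ * (s : ℝ) ^ k) := by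
    intro s hs
    have := p.summable_norm_mul_pow (lt_of_lt_of_le hs hp.r_le)
    refine this.congr fun k => ?_
    rw [FormalMultilinearSeries.norm_apply_eq_norm_coef]
  -- sum formula for h
  have hsum : ∀ z, dist z z₀ < (r₂ : ℝ) → HasSum (fun k => p.coeff k * (z - z₀) ^ k) (h z) := by
    intro z hz
    have hmem : z - z₀ ∈ Metric.eball (0 : ℂ) r0 := by
      rw [Metric.mem_eball, edist_zero_right]
      refine lt_trans ?_ hr₂r
      rw [enorm_eq_nnnorm]
      exact_mod_cast (by simpa [dist_eq_norm] using hz : ‖z - z₀‖ < (r₂ : ℝ))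
    have := hp.hasSum hmem
    simp only [FormalMultilinearSeries.apply_eq_pow_smul_coeff, smul_eq_mul] at this
    rw [add_sub_cancel] at this
    exact this.congr_fun fun k => by ring
  -- derivative of the would-be primitive
  have hT : ∀ z ∈ Metric.ball z₀ (r₃ : ℝ),
      HasDerivAt (fun w => ∑' k, A k * (w - z₀) ^ (k + n)) ((z - z₀) ^ m * h z) z := by
    intro z hz
    have hu : Summable (fun k => ‖p.coeff k‖ * (r₃ : ℝ) ^ (k + m)) := by
      refine ((S r₃ hr₃lt).mul_right ((r₃ : ℝ) ^ m)).congr fun k => ?_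
      rw [pow_add]; ring
    have key := hasDerivAt_tsum_of_isPreconnected hu isOpen_ball
      (convex_ball z₀ (r₃ : ℝ)).isPreconnected
      (g := fun k w => A k * (w - z₀) ^ (k + n))
      (g' := fun k w => p.coeff k * (w - z₀) ^ (k + m))
      (fun k w hw => ?_) (fun k w hw => ?_) (mem_ball_self hr₃pos) ?_ hz
    · have hval : ∑' k, p.coeff k * (z - z₀) ^ (k + m) = (z - z₀) ^ m * h z := by
        have : ∀ k : ℕ, p.coeff k * (z - z₀) ^ (k + m)
            = (z - z₀) ^ m * (p.coeff k * (z - z₀) ^ k) := by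
          intro k; rw [pow_add]; ring
        rw [tsum_congr this, tsum_mul_left,
          (hsum z (lt_of_lt_of_le (mem_ball.1 hz) hr₃le₂)).tsum_eq]
      rw [hval] at key
      exact key
    · -- term derivative
      have h1 : HasDerivAt (fun w => (w - z₀) ^ (k + n)) (((k + n : ℕ) : ℂ) * (w - z₀) ^ (k + n - 1)) w := by
        simpa using ((hasDerivAt_id w).sub_const z₀).fun_pow (k + n)
      have h2 := h1.const_mul (A k)
      refine h2.congr_deriv ?_
      have hsub : k + n - 1 = k + m := by omega
      rw [hsub, hA]
      have hcast : ((k + n : ℕ) : ℂ) = (k : ℂ) + n := by push_cast; ring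
      rw [hcast]
      field_simp
      rw [mul_right_comm, mul_div_assoc,
        div_self (hkn0 k), mul_one]
    · -- bound
      rw [norm_mul, norm_pow]
      have h1 : ‖w - z₀‖ ≤ (r₃ : ℝ) := le_of_lt (by simpa [dist_eq_norm] using hw)
      exact mul_le_mul_of_nonneg_left
        (pow_le_pow_left₀ (norm_nonneg _) h1 _) (norm_nonneg _)
    · -- summable at center
      refine summable_zero.congr fun k => ?_
      simp [zero_pow (by omega : k + n ≠ 0)]
  -- differentiability of Ψ
  have hΨdiff : ∀ z ∈ Metric.ball z₀ (r₄ : ℝ), DifferentiableAt ℂ Ψ z := by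
    obtain ⟨C, hCpos, hC⟩ := p.norm_mul_pow_le_of_lt_radius (lt_of_lt_of_le hr₃lt hp.r_le)
    intro z hz
    have hgeo : Summable (fun k : ℕ => (2 * C / (r₃ : ℝ)) * ((k : ℝ) * (2⁻¹ : ℝ) ^ k)) := by
      apply Summable.mul_left
      have := summable_pow_mul_geometric_of_norm_lt_one (R := ℝ) 1
        (r := (2⁻¹ : ℝ)) (by norm_num)
      simpa using this
    have key := hasDerivAt_tsum_of_isPreconnected hgeo isOpen_ball
      (convex_ball z₀ (r₄ : ℝ)).isPreconnected
      (g := fun k w => A k * (w - z₀) ^ k)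
      (g' := fun k w => A k * ((k : ℂ) * (w - z₀) ^ (k - 1)))
      (fun k w hw => ?_) (fun k w hw => ?_) (mem_ball_self hr₄pos) ?_ hz
    · exact key.differentiableAt
    · exact ((hasDerivAt_id w).sub_const z₀).pow k |>.const_mul (A k)
        |>.congr_deriv (by simp only [id_eq]; ring)
    · -- bound
      match k with
      | 0 => simp
      | (k + 1) =>
        have hnorm : ‖w - z₀‖ ≤ (r₄ : ℝ) := le_of_lt (by simpa [dist_eq_norm] using hw)
        have h1 : ‖p.coeff (k+1)‖ ≤ C / (r₃ : ℝ) ^ (k+1) := by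
          rw [le_div_iff₀ (by positivity)]
          calc ‖p.coeff (k+1)‖ * (r₃:ℝ) ^ (k+1) = ‖p (k+1)‖ * (r₃:ℝ) ^ (k+1) := by
                rw [FormalMultilinearSeries.norm_apply_eq_norm_coef]
            _ ≤ C := hC (k+1)
        calc ‖A (k+1) * (((k+1 : ℕ) : ℂ) * (w - z₀) ^ k)‖
            = ‖A (k+1)‖ * (((k+1 : ℕ) : ℝ) * ‖w - z₀‖ ^ k) := by
              rw [norm_mul, norm_mul, norm_pow, Complex.norm_natCast]
          _ ≤ ‖p.coeff (k+1)‖ * (((k+1 : ℕ) : ℝ) * (r₄:ℝ) ^ k) := by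
              apply mul_le_mul (hAle _) ?_ (by positivity) (norm_nonneg _)
              exact mul_le_mul_of_nonneg_left (pow_le_pow_left₀ (norm_nonneg _) hnorm _)
                (by positivity)
          _ ≤ (C / (r₃ : ℝ) ^ (k+1)) * (((k+1 : ℕ) : ℝ) * (r₄:ℝ) ^ k) := by
              apply mul_le_mul_of_nonneg_right h1 (by positivity)
          _ = (2 * C / (r₃ : ℝ)) * (((k+1 : ℕ) : ℝ) * (2⁻¹ : ℝ) ^ (k+1)) := by
              rw [hr₄₃, div_pow, inv_pow]
              field_simp
              ring
    · refine summable_of_ne_finset_zero (s := {0}) fun k hk => ?_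
      have : k ≠ 0 := by simpa using hk
      simp [zero_pow this]
  have hΨana : AnalyticAt ℂ Ψ z₀ := by
    apply DifferentiableOn.analyticAt (s := Metric.ball z₀ (r₄ : ℝ))
    · exact fun w hw => (hΨdiff w hw).differentiableWithinAt
    · exact Metric.ball_mem_nhds _ hr₄pos
  have hΨ0 : Ψ z₀ = h z₀ / (n : ℕ) := by
    have hΨz : Ψ z₀ = ∑' k, A k * (z₀ - z₀) ^ k := rfl
    rw [hΨz, tsum_eq_single 0 (fun k hk => by simp [zero_pow hk])]
    simp only [sub_self, pow_zero, mul_one, hA]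
    rw [show p.coeff 0 = h z₀ from ?_]
    · norm_num
    · have := hp.coeff_zero (fun _ => 1)
      rw [← this]
      rfl
  refine ⟨Ψ, (r₄ : ℝ), hr₄pos, hΨana, hΨ0, hΨdiff, fun z hz => ?_⟩
  have hball : z ∈ Metric.ball z₀ (r₃ : ℝ) := by
    refine mem_ball.2 (lt_of_lt_of_le (mem_ball.1 hz) ?_)
    rw [hr₄₃]; linarith
  have heq : (fun w => ∑' k, A k * (w - z₀) ^ (k + n))
      = fun w => (w - z₀) ^ n * Ψ w := by
    funext w
    rw [hΨ, ← tsum_mul_left]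
    exact tsum_congr fun k => by rw [pow_add]; ring
  have := hT z hball
  rw [heq] at this
  exact this


set_option maxHeartbeats 2000000 in
/-- If `f` is holomorphic on a punctured neighbourhood of `z₀` with
`f(z) ~ c (z - z₀)^{-m}` as `z → z₀` (`c ≠ 0`, `m ≥ 0`), then `ż = f(z)` has exactly
`m + 1` trajectories tending to `z₀` in increasing time, each taking finite time:
there are `m + 1` pairwise disjoint such trajectories, no trajectory tends to `z₀`
in infinite time, and every trajectory tending to `z₀` in increasing time eventually
coincides (up to time translation) with one of them. -/
theorem stmt4 (f : ℂ → ℂ) (z₀ : ℂ) (c : ℂ) (hc : c ≠ 0) (m : ℕ)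
    (U : Set ℂ) (hU : U ∈ nhds z₀)
    (hol : ∀ w ∈ U \ {z₀}, AnalyticAt ℂ f w)
    (hasym : Filter.Tendsto (fun w => f w * (w - z₀) ^ m) (nhdsWithin z₀ {z₀}ᶜ) (nhds c)) :
    ∃ (γ : Fin (m + 1) → ℝ → ℂ) (α β : Fin (m + 1) → ℝ),
      (∀ j, α j < β j ∧
        (∀ t ∈ Set.Ioo (α j) (β j), γ j t ∈ U \ {z₀} ∧ HasDerivAt (γ j) (f (γ j t)) t) ∧
        Filter.Tendsto (γ j) (nhdsWithin (β j) (Set.Iio (β j))) (nhds z₀)) ∧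
      (∀ j k, j ≠ k → ∀ s ∈ Set.Ioo (α j) (β j), ∀ t ∈ Set.Ioo (α k) (β k),
        γ j s ≠ γ k t) ∧
      (∀ (w : ℝ → ℂ) (a : ℝ),
        (∀ t ∈ Set.Ioi a, w t ∈ U \ {z₀} ∧ HasDerivAt w (f (w t)) t) →
        ¬ Filter.Tendsto w Filter.atTop (nhds z₀)) ∧
      (∀ (w : ℝ → ℂ) (a b : ℝ), a < b →
        (∀ t ∈ Set.Ioo a b, w t ∈ U \ {z₀} ∧ HasDerivAt w (f (w t)) t) →
        Filter.Tendsto w (nhdsWithin b (Set.Iio b)) (nhds z₀) →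
        ∃ (j : Fin (m + 1)) (τ : ℝ),
          ∀ᶠ t in nhdsWithin b (Set.Iio b), w t = γ j (t + τ)) := by
  set n : ℕ := m + 1 with hn
  have hnpos : 0 < n := Nat.succ_pos m
  have hn0C : (n : ℂ) ≠ 0 := Nat.cast_ne_zero.2 hnpos.ne'
  set F : ℂ → ℂ := fun w => f w * (w - z₀) ^ m with hFdef
  obtain ⟨r₀, hr₀pos, hball₀⟩ := Metric.mem_nhds_iff.1 hU
  have hFdiff : DifferentiableOn ℂ F (Metric.ball z₀ r₀ \ {z₀}) := by
    intro w hw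
    have hwU : w ∈ U \ {z₀} := ⟨hball₀ hw.1, hw.2⟩
    exact (((hol w hwU).differentiableAt).mul
      ((differentiableAt_id.sub_const z₀).pow m)).differentiableWithinAt
  have hFtend : Filter.Tendsto F (𝓝[≠] z₀) (𝓝 c) := hasym
  have hlim : limUnder (𝓝[≠] z₀) F = c := hFtend.limUnder_eq
  have hlittleo : (fun z => F z - F z₀) =o[𝓝[≠] z₀] fun z => (z - z₀)⁻¹ := by
    rw [Asymptotics.isLittleO_iff_tendsto' ?_]
    · have h1 : Filter.Tendsto (fun z => (F z - F z₀) * (z - z₀)) (𝓝[≠] z₀)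
          (𝓝 ((c - F z₀) * 0)) := by
        apply Filter.Tendsto.mul (hFtend.sub_const _)
        have : Filter.Tendsto (fun z : ℂ => z - z₀) (𝓝 z₀) (𝓝 (z₀ - z₀)) :=
          (continuous_id.sub continuous_const).tendsto z₀
        rw [sub_self] at this
        exact this.mono_left nhdsWithin_le_nhds
      rw [mul_zero] at h1
      refine h1.congr' ?_
      filter_upwards [self_mem_nhdsWithin] with z hz
      rw [div_inv_eq_mul]
    · filter_upwards [self_mem_nhdsWithin] with z hz h0
      exact absurd h0 (inv_ne_zero (sub_ne_zero.2 hz))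
  set Ft : ℂ → ℂ := Function.update F z₀ c with hFtdef
  have hFtdiff : DifferentiableOn ℂ Ft (Metric.ball z₀ r₀) := by
    have := Complex.differentiableOn_update_limUnder_of_isLittleO
      (Metric.ball_mem_nhds z₀ hr₀pos) hFdiff hlittleo
    rwa [hlim] at this
  have hFtana : AnalyticAt ℂ Ft z₀ := hFtdiff.analyticAt (Metric.ball_mem_nhds _ hr₀pos)
  have hFt0 : Ft z₀ = c := Function.update_self _ _ _
  have hFteq : ∀ z, z ≠ z₀ → Ft z = F z := fun z hz => Function.update_of_ne hz _ _
  set h : ℂ → ℂ := fun z => (Ft z)⁻¹ with hhdef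
  have hhana : AnalyticAt ℂ h z₀ := hFtana.inv (by rw [hFt0]; exact hc)
  have hh0 : h z₀ = c⁻¹ := by rw [hhdef]; simp [hFt0]
  obtain ⟨Ψ, rΨ, hrΨpos, hΨana, hΨ0, hΨdiff, hTd⟩ := aux_primitive hhana m
  set T : ℂ → ℂ := fun w => (w - z₀) ^ n * Ψ w with hTdef
  set g : ℂ → ℂ := fun z => (z - z₀) ^ m * h z with hgdef
  have hΨz₀ : Ψ z₀ = c⁻¹ / n := by rw [hΨ0, hh0]
  have hΨz₀ne : Ψ z₀ ≠ 0 := by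
    rw [hΨz₀]; exact div_ne_zero (inv_ne_zero hc) hn0C
  obtain ⟨d, hd⟩ := IsAlgClosed.exists_pow_nat_eq (Ψ z₀) hnpos
  have hd0 : d ≠ 0 := by
    intro h0; rw [h0, zero_pow hnpos.ne'] at hd; exact hΨz₀ne hd.symm
  set ρ : ℂ → ℂ := fun z => d * Complex.exp (Complex.log (Ψ z / Ψ z₀) / n) with hρdef
  set φ : ℂ → ℂ := fun z => (z - z₀) * ρ z with hφdef
  have hslit : ∀ z : ℂ, ‖Ψ z / Ψ z₀ - 1‖ < 1 / 2 →
      Ψ z / Ψ z₀ ∈ Complex.slitPlane ∧ Ψ z / Ψ z₀ ≠ 0 := by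
    intro z hz
    constructor
    · rw [Complex.mem_slitPlane_iff]
      left
      have h1 : |(Ψ z / Ψ z₀ - 1).re| ≤ ‖Ψ z / Ψ z₀ - 1‖ := Complex.abs_re_le_norm _
      have h2 : (Ψ z / Ψ z₀ - 1).re = (Ψ z / Ψ z₀).re - 1 := by simp
      have := abs_le.1 h1
      nlinarith [this.1]
    · intro h0
      rw [h0] at hz
      norm_num at hz
  have hρpow : ∀ z : ℂ, ‖Ψ z / Ψ z₀ - 1‖ < 1 / 2 → ρ z ^ n = Ψ z := by
    intro z hz
    obtain ⟨hsl, hne⟩ := hslit z hz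
    rw [hρdef]
    simp only
    rw [mul_pow, ← Complex.exp_nat_mul, mul_div_cancel₀ _ hn0C, Complex.exp_log hne, hd]
    field_simp
  have hρz₀ : ρ z₀ = d := by
    rw [hρdef]
    simp [div_self hΨz₀ne, Complex.log_one]
  have hρdiff : ∀ z : ℂ, DifferentiableAt ℂ Ψ z → ‖Ψ z / Ψ z₀ - 1‖ < 1 / 2 →
      DifferentiableAt ℂ ρ z := by
    intro z hΨd hz
    apply DifferentiableAt.const_mul
    apply DifferentiableAt.cexp
    apply DifferentiableAt.div_const
    exact (hΨd.div_const _).clog (hslit z hz).1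
  have hz₀ball : z₀ ∈ Metric.ball z₀ rΨ := Metric.mem_ball_self hrΨpos
  have hΨnear : ∀ᶠ z in 𝓝 z₀, ‖Ψ z / Ψ z₀ - 1‖ < 1 / 2 := by
    have hca : ContinuousAt (fun z => ‖Ψ z / Ψ z₀ - 1‖) z₀ :=
      (((hΨana.continuousAt.div_const _).sub continuousAt_const).norm)
    have h0 : ‖Ψ z₀ / Ψ z₀ - 1‖ < 1 / 2 := by
      rw [div_self hΨz₀ne]; norm_num
    exact Filter.Tendsto.eventually_lt_const h0 hca.tendsto
  have hφz₀ : φ z₀ = 0 := by rw [hφdef]; simp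
  have hφderiv0 : HasDerivAt φ d z₀ := by
    have hρd : DifferentiableAt ℂ ρ z₀ :=
      hρdiff z₀ (hΨdiff z₀ hz₀ball) (by
        have := hΨnear.self_of_nhds
        exact this)
    have h1 := ((hasDerivAt_id z₀).sub_const z₀).mul hρd.hasDerivAt
    refine h1.congr_deriv ?_
    simp [hρz₀]
  have hρana : AnalyticAt ℂ ρ z₀ := by
    have hq : AnalyticAt ℂ (fun w => Ψ w / Ψ z₀) z₀ := hΨana.div analyticAt_const hΨz₀ne
    have h1 : AnalyticAt ℂ (fun w => Complex.log (Ψ w / Ψ z₀)) z₀ := by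
      refine hq.clog ?_
      rw [div_self hΨz₀ne]
      exact Complex.one_mem_slitPlane
    have h2 : AnalyticAt ℂ (fun w => Complex.log (Ψ w / Ψ z₀) / (n : ℂ)) z₀ :=
      h1.div analyticAt_const hn0C
    exact analyticAt_const.mul h2.cexp
  have hφana : AnalyticAt ℂ φ z₀ := (analyticAt_id.sub analyticAt_const).mul hρana
  obtain ⟨pφ, hpφ⟩ := id hφana
  have hstrict : HasStrictDerivAt φ d z₀ := by
    have h1 := hpφ.hasStrictDerivAt
    have h2 : (pφ 1 fun _ => 1) = d := h1.hasDerivAt.unique hφderiv0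
    rwa [h2] at h1
  set E : ℂ ≃L[ℂ] ℂ := ContinuousLinearEquiv.unitsEquivAut ℂ (Units.mk0 d hd0) with hEdef
  have hstrictF : HasStrictFDerivAt φ (E : ℂ →L[ℂ] ℂ) z₀ := by
    have h1 : HasStrictFDerivAt φ (ContinuousLinearMap.smulRight (1 : ℂ →L[ℂ] ℂ) d) z₀ := hstrict
    convert h1 using 1
    ext; simp [hEdef]
  set Φ₀ := hstrictF.toOpenPartialHomeomorph φ with hΦ₀def
  have hΦ₀coe : (Φ₀ : ℂ → ℂ) = φ := hstrictF.toOpenPartialHomeomorph_coe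
  have hz₀Φ₀ : z₀ ∈ Φ₀.source := hstrictF.mem_toOpenPartialHomeomorph_source
  -- continuity/nonvanishing of deriv φ near z₀
  have hderivne : ∀ᶠ z in 𝓝 z₀, deriv φ z ≠ 0 := by
    have hfd : AnalyticAt ℂ (fderiv ℂ φ) z₀ := AnalyticAt.fderiv hφana
    have hca : ContinuousAt (fun z => fderiv ℂ φ z 1) z₀ := by
      exact (ContinuousLinearMap.apply ℂ ℂ 1).continuous.continuousAt.comp
        hfd.continuousAt
    have heq : (fun z => deriv φ z) = fun z => fderiv ℂ φ z 1 := by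
      funext z; rw [fderiv_apply_one_eq_deriv]
    have hcd : ContinuousAt (deriv φ) z₀ := by
      show ContinuousAt (fun z => deriv φ z) z₀
      simp only [← fderiv_apply_one_eq_deriv]
      exact hca
    apply hcd.eventually_ne
    rw [hφderiv0.deriv]
    exact hd0
  -- the collection of eventual facts
  have hevU : ∀ᶠ z in 𝓝 z₀, z ∈ U := hU
  have hevFt : ∀ᶠ z in 𝓝 z₀, Ft z ≠ 0 := hFtana.continuousAt.eventually_ne (hFt0 ▸ hc)
  have hevΨ : ∀ᶠ z in 𝓝 z₀, DifferentiableAt ℂ Ψ z ∧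
      HasDerivAt T (g z) z := by
    filter_upwards [Metric.ball_mem_nhds z₀ hrΨpos] with z hz
    exact ⟨hΨdiff z hz, hTd z hz⟩
  obtain ⟨R, hRpos, hGfact⟩ := Metric.eventually_nhds_iff_ball.1
    (hevU.and (hevFt.and (hevΨ.and (hΨnear.and hderivne))))
  set G := Metric.ball z₀ R with hGdef
  -- pointwise facts on G
  have hGU : ∀ z ∈ G, z ∈ U := fun z hz => (hGfact z hz).1
  have hGfg : ∀ z ∈ G, z ≠ z₀ → f z * g z = 1 ∧ g z ≠ 0 := by
    intro z hz hzne
    obtain ⟨-, hFtne, -, -, -⟩ := hGfact z hz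
    have hFz : F z ≠ 0 := by rw [← hFteq z hzne]; exact hFtne
    constructor
    · rw [hgdef]
      simp only
      rw [hhdef]
      simp only
      rw [hFteq z hzne]
      field_simp [hFz]
      rfl
    · apply mul_ne_zero
      · exact pow_ne_zero _ (sub_ne_zero.2 hzne)
      · rw [hhdef]; exact inv_ne_zero hFtne
  have hGT : ∀ z ∈ G, HasDerivAt T (g z) z := fun z hz => (hGfact z hz).2.2.1.2
  have hGφT : ∀ z ∈ G, φ z ^ n = T z := by
    intro z hz
    obtain ⟨-, -, -, hsl, -⟩ := hGfact z hz
    rw [hφdef]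
    simp only
    rw [mul_pow, hρpow z hsl, hTdef]
  have hGφd : ∀ z ∈ G, HasDerivAt φ (deriv φ z) z ∧ deriv φ z ≠ 0 := by
    intro z hz
    obtain ⟨-, -, ⟨hΨd, -⟩, hsl, hdne⟩ := hGfact z hz
    have : DifferentiableAt ℂ φ z :=
      (differentiableAt_id.sub_const z₀).mul (hρdiff z hΨd hsl)
    exact ⟨this.hasDerivAt, hdne⟩
  -- T is continuous at z₀ with value 0
  have hT0 : T z₀ = 0 := by rw [hTdef]; simp [zero_pow hnpos.ne']
  have hTcont : ContinuousAt T z₀ := by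
    rw [hTdef]
    exact (((continuous_id.sub continuous_const).pow n).continuousAt).mul
      hΨana.continuousAt
  -- the local homeomorphism restricted to G
  set Φ : OpenPartialHomeomorph ℂ ℂ := Φ₀.restr G with hΦdef
  have hΦcoe : (Φ : ℂ → ℂ) = φ := by rw [hΦdef, hΦ₀def]; exact hΦ₀coe
  have hΦsource : Φ.source = Φ₀.source ∩ G := by
    rw [hΦdef]; exact Φ₀.restr_source' G Metric.isOpen_ball
  have hΦsymmcoe : (Φ.symm : ℂ → ℂ) = (Φ₀.restr G).symm := rfl
  have hz₀src : z₀ ∈ Φ.source := by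
    rw [hΦsource]; exact ⟨hz₀Φ₀, Metric.mem_ball_self hRpos⟩
  have hsrcG : Φ.source ⊆ G := by rw [hΦsource]; exact Set.inter_subset_right
  have hΦz₀ : Φ z₀ = 0 := by rw [hΦcoe]; exact hφz₀
  have h0tgt : (0 : ℂ) ∈ Φ.target := by rw [← hΦz₀]; exact Φ.map_source hz₀src
  obtain ⟨δ, hδpos, hδ⟩ := Metric.isOpen_iff.1 Φ.open_target 0 h0tgt
  set ε : ℝ := δ ^ n with hεdef
  have hεpos : 0 < ε := pow_pos hδpos n
  set Rj : Fin n → ℝ → ℂ := fun j t => (((-t) ^ ((n : ℝ)⁻¹) : ℝ) : ℂ) * eRoot n j with hRjdef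
  set γ : Fin n → ℝ → ℂ := fun j t => Φ.symm (Rj j t) with hγdef
  have hRnorm : ∀ (j : Fin n) (t : ℝ), t < 0 → ‖Rj j t‖ = (-t) ^ ((n : ℝ)⁻¹) := by
    intro j t ht
    have h1 : ‖(((-t) ^ ((n : ℝ)⁻¹) : ℝ) : ℂ)‖ = (-t) ^ ((n : ℝ)⁻¹) := by
      rw [Complex.norm_real, Real.norm_eq_abs,
        _root_.abs_of_nonneg (Real.rpow_nonneg (by linarith) _)]
    have h2 : ‖eRoot n j‖ = 1 := by rw [eRoot_norm]
    rw [hRjdef]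
    simp only
    rw [norm_mul, h1, h2, mul_one]
  have hRmem : ∀ (j : Fin n), ∀ t ∈ Set.Ioo (-ε) 0, Rj j t ∈ Φ.target := by
    intro j t ht
    apply hδ
    rw [Metric.mem_ball, dist_zero_right, hRnorm j t ht.2]
    have h1 : -t < δ ^ n := hεdef ▸ (by linarith [ht.1] : -t < ε)
    calc (-t) ^ ((n:ℝ)⁻¹) < (δ ^ n) ^ ((n:ℝ)⁻¹) := by
          apply Real.rpow_lt_rpow (by linarith [ht.2]) h1
          simp [Nat.cast_pos.2 hnpos]
      _ = δ := Real.pow_rpow_inv_natCast hδpos.le hnpos.ne'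
  have hRpow : ∀ (j : Fin n), ∀ t : ℝ, t < 0 → Rj j t ^ n = (t : ℂ) := by
    intro j t ht
    rw [hRjdef]
    simp only
    rw [mul_pow, eRoot_pow hnpos, ← Complex.ofReal_pow,
      Real.rpow_inv_natCast_pow (by linarith) hnpos.ne']
    push_cast
    ring
  have hRne : ∀ (j : Fin n), ∀ t : ℝ, t < 0 → Rj j t ≠ 0 := by
    intro j t ht h0
    have h1 := hRnorm j t ht
    rw [h0, norm_zero] at h1
    have h2 : (0:ℝ) < (-t) ^ ((n:ℝ)⁻¹) := Real.rpow_pos_of_pos (by linarith) _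
    exact absurd h1.symm h2.ne'
  -- along any solution in G, (T ∘ w)(s) - s has derivative 0
  have hTone : ∀ (w : ℝ → ℂ) (t : ℝ), w t ∈ G → w t ≠ z₀ → HasDerivAt w (f (w t)) t →
      HasDerivAt (fun s => T (w s) - (s : ℂ)) 0 t := by
    intro w t hwG hwne hw
    have h1 : HasDerivAt (fun s => T (w s)) (f (w t) • g (w t)) t :=
      HasDerivAt.scomp (g₁ := T) (h := w) (x := t) (hGT _ hwG) hw
    have h2 : HasDerivAt (fun s : ℝ => (s : ℂ)) 1 t := by
      simpa using (hasDerivAt_id t).ofReal_comp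
    refine (h1.sub h2).congr_deriv ?_
    rw [smul_eq_mul, (hGfg _ hwG hwne).1, sub_self]
  have hG𝓝 : G ∈ 𝓝 z₀ := Metric.ball_mem_nhds _ hRpos
  -- clause 3 : no trajectory in infinite time
  have clause3 : ∀ (w : ℝ → ℂ) (a : ℝ),
      (∀ t ∈ Set.Ioi a, w t ∈ U \ {z₀} ∧ HasDerivAt w (f (w t)) t) →
      ¬ Filter.Tendsto w Filter.atTop (𝓝 z₀) := by
    intro w a hw htend
    obtain ⟨t₀', ht₀'⟩ := Filter.eventually_atTop.1 (htend.eventually hG𝓝)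
    set t₁ : ℝ := max t₀' (a + 1) with ht₁def
    have hq : ∀ t ∈ Set.Ioi t₁, HasDerivAt (fun s => T (w s) - (s : ℂ)) 0 t := by
      intro t ht
      have htG : w t ∈ G := ht₀' t (le_trans (le_max_left _ _) (le_of_lt ht))
      have hta : t ∈ Set.Ioi a := lt_of_lt_of_le (by linarith [le_max_right t₀' (a+1), ht₁def] : a < t₁)
        (le_of_lt ht)
      exact hTone w t htG (by simpa using (hw t hta).1.2) (hw t hta).2
    have hconst := aux_const Set.ordConnected_Ioi hq
    set C : ℂ := T (w (t₁ + 1)) - ((t₁ + 1 : ℝ) : ℂ) with hCdef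
    have hTC : ∀ t ∈ Set.Ioi t₁, T (w t) = (t : ℂ) + C := by
      intro t ht
      have := hconst t ht (t₁ + 1) (by simp only [Set.mem_Ioi]; linarith)
      rw [hCdef, ← this]
      ring
    have hlim1 : Filter.Tendsto (fun t => T (w t)) Filter.atTop (𝓝 0) := by
      have := hTcont.tendsto.comp htend
      rwa [hT0] at this
    have hev : (fun t => T (w t)) =ᶠ[Filter.atTop] fun t => ((t : ℝ) : ℂ) + C := by
      filter_upwards [Filter.eventually_gt_atTop t₁] with t ht
      exact hTC t ht
    have hlim2 : Filter.Tendsto (fun t : ℝ => ((t : ℝ) : ℂ) + C) Filter.atTop (𝓝 0) :=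
      hlim1.congr' hev
    have hlim3 : Filter.Tendsto (fun t : ℝ => ‖((t : ℝ) : ℂ) + C‖) Filter.atTop (𝓝 0) := by
      simpa using hlim2.norm
    have h5 : ∀ᶠ t : ℝ in Filter.atTop, ‖((t : ℝ) : ℂ) + C‖ < 1 :=
      Filter.Tendsto.eventually_lt_const (by norm_num) hlim3
    obtain ⟨t, h7, h8⟩ := (h5.and (Filter.eventually_ge_atTop (‖C‖ + 2))).exists
    have h9 : ‖((t : ℝ) : ℂ)‖ ≤ ‖((t : ℝ) : ℂ) + C‖ + ‖C‖ := by
      calc ‖((t : ℝ) : ℂ)‖ = ‖(((t : ℝ) : ℂ) + C) + (-C)‖ := by rw [add_neg_cancel_right]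
        _ ≤ ‖((t : ℝ) : ℂ) + C‖ + ‖-C‖ := norm_add_le _ _
        _ = ‖((t : ℝ) : ℂ) + C‖ + ‖C‖ := by rw [norm_neg]
    have h10 : ‖((t : ℝ) : ℂ)‖ = |t| := by rw [Complex.norm_real, Real.norm_eq_abs]
    have h11 : t ≤ |t| := le_abs_self t
    rw [h10] at h9
    linarith
  -- clause 1 : properties of the constructed trajectories
  have clause1 : ∀ j : Fin n, (-ε < (0:ℝ)) ∧
      (∀ t ∈ Set.Ioo (-ε) (0:ℝ), γ j t ∈ U \ {z₀} ∧ HasDerivAt (γ j) (f (γ j t)) t) ∧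
      Filter.Tendsto (γ j) (𝓝[<] (0:ℝ)) (𝓝 z₀) := by
    intro j
    have hγval : ∀ t, γ j t = Φ.symm (Rj j t) := fun t => rfl
    refine ⟨neg_lt_zero.2 hεpos, fun t ht => ?_, ?_⟩
    · have hmem := hRmem j t ht
      have hxsrc : γ j t ∈ Φ.source := by rw [hγval]; exact Φ.map_target hmem
      have hΦx : Φ (γ j t) = Rj j t := by rw [hγval]; exact Φ.right_inv hmem
      have hxG : γ j t ∈ G := hsrcG hxsrc
      have hxne : γ j t ≠ z₀ := by
        intro h0
        rw [h0, hΦz₀] at hΦx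
        exact hRne j t ht.2 hΦx.symm
      refine ⟨⟨hGU _ hxG, by simpa using hxne⟩, ?_⟩
      obtain ⟨hφd, hφdne⟩ := hGφd _ hxG
      have hφΦ : HasDerivAt (Φ : ℂ → ℂ) (deriv φ (γ j t)) (Φ.symm (Rj j t)) := by
        rw [hΦcoe, ← hγval]; exact hφd
      have hsymm : HasDerivAt (Φ.symm : ℂ → ℂ) (deriv φ (γ j t))⁻¹ (Rj j t) := by
        have := Φ.hasDerivAt_symm hmem hφdne (by rw [← hγval] at hφΦ ⊢; exact hφΦ)
        exact this
      have hrp : HasDerivAt (fun s : ℝ => (-s) ^ ((n:ℝ)⁻¹))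
          ((((n:ℝ)⁻¹ * (-t) ^ ((n:ℝ)⁻¹ - 1)) * (-1))) t := by
        have houter : HasDerivAt (fun x : ℝ => x ^ ((n:ℝ)⁻¹))
            ((n:ℝ)⁻¹ * (-t) ^ ((n:ℝ)⁻¹ - 1)) (-t) :=
          Real.hasDerivAt_rpow_const (Or.inl (by
            have := ht.2; intro h0; rw [neg_eq_zero] at h0; exact absurd h0 (by linarith)))
        have hin : HasDerivAt (fun s : ℝ => -s) (-1) t := by
          exact hasDerivAt_neg' t
        exact houter.comp t hin
      have hR' : HasDerivAt (Rj j)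
          ((((((n:ℝ)⁻¹ * (-t) ^ ((n:ℝ)⁻¹ - 1)) * (-1)) : ℝ) : ℂ) * eRoot n j) t := by
        exact (hrp.ofReal_comp).mul_const _
      have hγd := HasDerivAt.scomp (x := t) (h := Rj j) hsymm hR'
      have hTγ : (fun s => T (γ j s)) =ᶠ[𝓝 t] fun s : ℝ => (s : ℂ) := by
        filter_upwards [Ioo_mem_nhds ht.1 ht.2] with s hs
        have hmem' := hRmem j s hs
        calc T (γ j s) = φ (γ j s) ^ n :=
              (hGφT _ (hsrcG (by rw [hγval]; exact Φ.map_target hmem'))).symm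
          _ = (Φ (γ j s)) ^ n := by rw [hΦcoe]
          _ = (Rj j s) ^ n := by rw [hγval]; rw [Φ.right_inv hmem']
          _ = (s : ℂ) := hRpow j s hs.2
      have hid : HasDerivAt (fun s : ℝ => (s:ℂ)) 1 t := by
        simpa using (hasDerivAt_id t).ofReal_comp
      have hTγd : HasDerivAt (fun s => T (γ j s))
          (((((((n:ℝ)⁻¹ * (-t) ^ ((n:ℝ)⁻¹ - 1)) * (-1)) : ℝ) : ℂ) * eRoot n j) •
            (deriv φ (γ j t))⁻¹ • g (γ j t)) t := by
        have := HasDerivAt.scomp (x := t) (h := fun s => γ j s) (hGT _ hxG) hγd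
        simpa [smul_eq_mul, mul_assoc, Function.comp_def] using this
      have hTγd1 : HasDerivAt (fun s => T (γ j s)) 1 t :=
        hid.congr_of_eventuallyEq hTγ
      set V : ℂ := ((((((n:ℝ)⁻¹ * (-t) ^ ((n:ℝ)⁻¹ - 1)) * (-1)) : ℝ) : ℂ) * eRoot n j) *
        (deriv φ (γ j t))⁻¹ with hVdef
      have hVg : V * g (γ j t) = 1 := by
        have h1 := hTγd.unique hTγd1
        rw [hVdef]
        simpa [smul_eq_mul, mul_assoc] using h1
      have hfg := hGfg _ hxG hxne
      have hVf : V = f (γ j t) := by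
        apply mul_right_cancel₀ hfg.2
        rw [hVg, hfg.1]
      have : HasDerivAt (γ j) V t := by
        refine hγd.congr_deriv ?_
        rw [hVdef, smul_eq_mul]
      exact this.congr_deriv hVf
    · have h1 : ContinuousAt (fun s : ℝ => (-s) ^ ((n:ℝ)⁻¹)) 0 := by
        have houter : ContinuousAt (fun x : ℝ => x ^ ((n:ℝ)⁻¹)) (-0 : ℝ) := by
          rw [neg_zero]
          exact Real.continuousAt_rpow_const 0 ((n:ℝ)⁻¹) (Or.inr (by positivity))
        exact houter.comp (continuous_neg.continuousAt (x := (0:ℝ)))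
      have h2 : ContinuousAt (Rj j) 0 :=
        (Complex.continuous_ofReal.continuousAt.comp h1).mul continuousAt_const
      have h3 : Rj j 0 = 0 := by
        have : ((0:ℝ)) ^ ((n:ℝ)⁻¹) = 0 :=
          Real.zero_rpow (by positivity)
        rw [hRjdef]; simp [this]
      have h4 : Filter.Tendsto (Rj j) (𝓝[<] (0:ℝ)) (𝓝 0) := by
        have h4' : Filter.Tendsto (Rj j) (𝓝[Set.Iio (0:ℝ)] (0:ℝ)) (𝓝 (Rj j 0)) :=
          h2.tendsto.mono_left nhdsWithin_le_nhds
        rwa [h3] at h4'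
      have h5 : ContinuousAt (Φ.symm : ℂ → ℂ) 0 :=
        Φ.symm.continuousAt (by rw [Φ.symm_source]; exact h0tgt)
      have h6 : Φ.symm 0 = z₀ := by
        have := Φ.left_inv hz₀src
        rwa [hΦz₀] at this
      have := (h5.tendsto.comp h4)
      rwa [h6] at this
  -- clause 2 : disjointness
  have clause2 : ∀ j k : Fin n, j ≠ k → ∀ s ∈ Set.Ioo (-ε) (0:ℝ),
      ∀ t ∈ Set.Ioo (-ε) (0:ℝ), γ j s ≠ γ k t := by
    intro j k hjk s hs t ht heq
    have h1 : Rj j s = Rj k t := by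
      have e1 : Φ (γ j s) = Rj j s := Φ.right_inv (hRmem j s hs)
      have e2 : Φ (γ k t) = Rj k t := Φ.right_inv (hRmem k t ht)
      rw [← e1, ← e2, heq]
    have h2 : (-s) ^ ((n:ℝ)⁻¹) = (-t) ^ ((n:ℝ)⁻¹) := by
      have := congrArg norm h1
      rwa [hRnorm j s hs.2, hRnorm k t ht.2] at this
    have hpos : (0:ℝ) < (-s) ^ ((n:ℝ)⁻¹) :=
      Real.rpow_pos_of_pos (by linarith [hs.2]) _
    have h4 : ((((-s) ^ ((n:ℝ)⁻¹) : ℝ)) : ℂ) ≠ 0 := by exact_mod_cast hpos.ne'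
    have h3 : eRoot n j = eRoot n k := by
      apply mul_left_cancel₀ h4
      have : ((((-t) ^ ((n:ℝ)⁻¹) : ℝ)) : ℂ) = ((((-s) ^ ((n:ℝ)⁻¹) : ℝ)) : ℂ) :=
        congrArg (fun x : ℝ => (x : ℂ)) h2.symm
      rw [hRjdef] at h1
      simpa [this] using h1
    exact hjk (Fin.ext (eRoot_inj hnpos j.isLt k.isLt h3))
  -- clause 4 : classification
  have clause4 : ∀ (w : ℝ → ℂ) (a b : ℝ), a < b →
      (∀ t ∈ Set.Ioo a b, w t ∈ U \ {z₀} ∧ HasDerivAt w (f (w t)) t) →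
      Filter.Tendsto w (𝓝[<] b) (𝓝 z₀) →
      ∃ (j : Fin n) (τ : ℝ), ∀ᶠ t in 𝓝[<] b, w t = γ j (t + τ) := by
    intro w a b hab hw htend
    have hG' : G ∩ Φ.source ∈ 𝓝 z₀ :=
      Filter.inter_mem hG𝓝 (Φ.open_source.mem_nhds hz₀src)
    obtain ⟨l, hlb, hl⟩ := mem_nhdsLT_iff_exists_Ioo_subset.1 (htend hG')
    set t₀ : ℝ := max l ((a + b) / 2) with ht₀def
    have ht₀b : t₀ < b := max_lt hlb (by linarith)
    have hat₀ : a < t₀ := lt_of_lt_of_le (by linarith) (le_max_right _ _)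
    have hsub1 : Set.Ioo t₀ b ⊆ Set.Ioo a b :=
      fun u hu => ⟨lt_trans hat₀ hu.1, hu.2⟩
    have hsub2 : ∀ u ∈ Set.Ioo t₀ b, w u ∈ G ∩ Φ.source :=
      fun u hu => hl ⟨lt_of_le_of_lt (le_max_left _ _) hu.1, hu.2⟩
    have hq : ∀ u ∈ Set.Ioo t₀ b, HasDerivAt (fun s => T (w s) - (s : ℂ)) 0 u := by
      intro u hu
      exact hTone w u (hsub2 u hu).1 (by simpa using (hw u (hsub1 hu)).1.2)
        (hw u (hsub1 hu)).2
    have hconst := aux_const Set.ordConnected_Ioo hq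
    set t₁ : ℝ := (t₀ + b) / 2 with ht₁def
    have ht₁s : t₁ ∈ Set.Ioo t₀ b := ⟨by rw [ht₁def]; linarith, by rw [ht₁def]; linarith⟩
    set C : ℂ := T (w t₁) - (t₁ : ℂ) with hCdef
    have hTC : ∀ u ∈ Set.Ioo t₀ b, T (w u) = (u : ℂ) + C := by
      intro u hu
      have := hconst u hu t₁ ht₁s
      rw [hCdef, ← this]
      ring
    have hlim1 : Filter.Tendsto (fun u => T (w u)) (𝓝[<] b) (𝓝 0) := by
      have := hTcont.tendsto.comp htend
      rwa [hT0] at this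
    have hev : (fun u => T (w u)) =ᶠ[𝓝[<] b] fun u : ℝ => (u : ℂ) + C := by
      filter_upwards [Ioo_mem_nhdsLT_of_mem ⟨ht₀b, le_refl b⟩] with u hu
      exact hTC u hu
    have hlim2 : Filter.Tendsto (fun u : ℝ => (u : ℂ) + C) (𝓝[<] b) (𝓝 ((b : ℂ) + C)) := by
      have h1 : Filter.Tendsto (fun u : ℝ => (u : ℂ)) (𝓝 b) (𝓝 (b : ℂ)) :=
        Complex.continuous_ofReal.continuousAt
      exact (h1.mono_left nhdsWithin_le_nhds).add_const C
    have hbC : (b : ℂ) + C = 0 := tendsto_nhds_unique hlim2 (hlim1.congr' hev)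
    have hCval : C = -(b : ℂ) := by linear_combination hbC
    have hTt : ∀ u ∈ Set.Ioo t₀ b, T (w u) = (u : ℂ) - b := by
      intro u hu
      rw [hTC u hu, hCval]
      ring
    have hφw : ∀ u ∈ Set.Ioo t₀ b, φ (w u) ^ n = (u : ℂ) - b :=
      fun u hu => by rw [hGφT _ (hsub2 u hu).1, hTt u hu]
    set uu : ℝ → ℂ := fun u => φ (w u) / ((((b - u) ^ ((n:ℝ)⁻¹)) : ℝ) : ℂ) with huudef
    have hden : ∀ u ∈ Set.Ioo t₀ b, (0:ℝ) < (b - u) ^ ((n:ℝ)⁻¹) :=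
      fun u hu => Real.rpow_pos_of_pos (by linarith [hu.2]) _
    have hdenC : ∀ u ∈ Set.Ioo t₀ b, (((((b - u) ^ ((n:ℝ)⁻¹)) : ℝ)) : ℂ) ≠ 0 :=
      fun u hu => by exact_mod_cast (hden u hu).ne'
    have hupow : ∀ u ∈ Set.Ioo t₀ b, uu u ^ n = -1 := by
      intro u hu
      rw [huudef]
      simp only
      rw [div_pow, hφw u hu, ← Complex.ofReal_pow,
        Real.rpow_inv_natCast_pow (by linarith [hu.2]) hnpos.ne']
      have hbu : ((b - u : ℝ) : ℂ) ≠ 0 := by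
        exact_mod_cast (by linarith [hu.2] : (b - u : ℝ) ≠ 0)
      rw [div_eq_iff hbu]
      push_cast
      ring
    have hFfin : Set.Finite {z : ℂ | z ^ n = -1} := by
      apply Set.Finite.subset ((Polynomial.nthRoots n (-1 : ℂ)).toFinset.finite_toSet)
      intro z hz
      simp only [Multiset.mem_toFinset, Finset.coe_sort_coe, Finset.mem_coe]
      rw [Polynomial.mem_nthRoots hnpos]
      exact hz
    have ucont : ContinuousOn uu (Set.Ioo t₀ b) := by
      intro u hu
      have hwc : ContinuousAt w u := (hw u (hsub1 hu)).2.continuousAt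
      have hφc : ContinuousAt φ (w u) :=
        (hGφd _ (hsub2 u hu).1).1.differentiableAt.continuousAt
      have hrc : ContinuousAt (fun u : ℝ => ((((b - u) ^ ((n:ℝ)⁻¹)) : ℝ) : ℂ)) u := by
        apply Complex.continuous_ofReal.continuousAt.comp
        have houter := Real.continuousAt_rpow_const (b - u) ((n:ℝ)⁻¹)
          (Or.inl (by linarith [hu.2]))
        exact houter.comp ((continuous_const.sub continuous_id).continuousAt)
      exact (((hφc.comp hwc).div hrc (hdenC u hu)).continuousWithinAt)
    haveI : Finite ↥{z : ℂ | z ^ n = -1} := hFfin.to_subtype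
    have uconst : ∀ x ∈ Set.Ioo t₀ b, ∀ y ∈ Set.Ioo t₀ b, uu x = uu y := by
      intro x hx y hy
      exact IsPreconnected.constant_of_mapsTo (isPreconnected_Ioo (a := t₀) (b := b))
        (T := {z : ℂ | z ^ n = -1}) hFfin.isDiscrete ucont (fun u hu => hupow u hu) hx hy
    obtain ⟨j, hj⟩ := aux_root hnpos (hupow t₁ ht₁s)
    refine ⟨j, -b, ?_⟩
    filter_upwards [Ioo_mem_nhdsLT_of_mem ⟨ht₀b, le_refl b⟩] with u hu
    have h1 : uu u = eRoot n j := by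
      rw [uconst u hu t₁ ht₁s]
      exact hj
    have h2 : φ (w u) = ((((b - u) ^ ((n:ℝ)⁻¹)) : ℝ) : ℂ) * eRoot n j := by
      rw [← h1, huudef]
      simp only
      rw [mul_comm, div_mul_cancel₀ _ (hdenC u hu)]
    have h3 : Rj j (u + -b) = φ (w u) := by
      have harg : -(u + -b) = b - u := by ring
      rw [hRjdef]
      simp only
      rw [harg, h2]
    have h4 : γ j (u + -b) = Φ.symm (φ (w u)) := by rw [hγdef]; simp only; rw [h3]
    rw [h4, ← hΦcoe, Φ.left_inv (hsub2 u hu).2]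
  exact ⟨γ, fun _ => -ε, fun _ => 0, clause1, clause2, clause3, clause4⟩
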